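/- The domain of a parallel composition of multirelations is the intersection of the domains: d(R‖S) = d(R) ∩ d(S); moreover for domain elements, parallel composition equals sequential composition: d(R)‖d(S) = d(R) · d(S). -/
import Mathlib


open Set

/-- Sequential composition of multirelations (Peleg). -/
def mseq {X : Type*} (R S : Set (X × Set X)) : Set (X × Set X) :=
  {p | ∃ B, (p.1, B) ∈ R ∧ ∃ f : X → Set X, (∀ b ∈ B, (b, f b) ∈ S) ∧ p.2 = ⋃ b ∈ B, f b}

/-- The unit of sequential composition. -/
def sunit (X : Type*) : Set (X × Set X) := {p | p.2 = {p.1}}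

/-- Parallel (concurrent) composition of multirelations. -/
def mpar {X : Type*} (R S : Set (X × Set X)) : Set (X × Set X) :=
  {p | ∃ A B, (p.1, A) ∈ R ∧ (p.1, B) ∈ S ∧ p.2 = A ∪ B}

/-- The unit of parallel composition. -/
def punit (X : Type*) : Set (X × Set X) := {p | p.2 = (∅ : Set X)}

/-- Domain of a multirelation. -/
def mdom {X : Type*} (R : Set (X × Set X)) : Set (X × Set X) :=
  {p | p.2 = {p.1} ∧ ∃ A, (p.1, A) ∈ R}

/-- Antidomain of a multirelation. -/
def mantidom {X : Type*} (R : Set (X × Set X)) : Set (X × Set X) :=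
  {p | p.2 = {p.1} ∧ ¬ ∃ A, (p.1, A) ∈ R}

/-- Diamond operator. -/
def mdia {X : Type*} (R P : Set (X × Set X)) : Set (X × Set X) := mdom (mseq R P)

theorem stmt13 {X : Type*} (R S : Set (X × Set X)) :
    mdom (mpar R S) = mdom R ∩ mdom S ∧
    mpar (mdom R) (mdom S) = mseq (mdom R) (mdom S) := by
  constructor
  · ext ⟨a, A⟩
    simp only [mdom, mpar, Set.mem_setOf_eq, Set.mem_inter_iff]
    constructor
    · rintro ⟨hA, B, C, D, hC, hD, rfl⟩
      exact ⟨⟨hA, C, hC⟩, ⟨hA, D, hD⟩⟩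
    · rintro ⟨⟨hA, C, hC⟩, ⟨_, D, hD⟩⟩
      exact ⟨hA, _, C, D, hC, hD, rfl⟩
  · ext ⟨a, A⟩
    simp only [mdom, mpar, mseq, Set.mem_setOf_eq]
    constructor
    · rintro ⟨B, C, ⟨rfl, hB⟩, ⟨rfl, hC⟩, rfl⟩
      refine ⟨{a}, ⟨rfl, hB⟩, fun x => {x}, ?_, by simp⟩
      rintro b hb; simp at hb; subst hb; exact ⟨rfl, hC⟩
    · rintro ⟨B, ⟨rfl, hB⟩, f, hf, rfl⟩
      obtain ⟨hfa, hC⟩ := hf a (by simp)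
      exact ⟨{a}, {a}, ⟨rfl, hB⟩, ⟨rfl, hC⟩, by simp [hfa]⟩
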